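/- Let L ⊆ ℝ be a nonempty bounded open set, the disjoint union of countably many open intervals of lengths ℓ_1, ℓ_2, …, and let D = inf{ t ≥ 0 : ∃ C > 0 such that V_L(ε) ≤ C ε^{1−t} for all ε ∈ (0,1] } be the Minkowski dimension of ∂L. Then inf{ σ > 0 : ∑_n ℓ_n^σ < ∞ } = D; equivalently, for σ > 0 the series ∑_n ℓ_n^s converges absolutely on the half-plane {s ∈ ℂ : Re s > σ} if and only if σ ≥ D. -/

import Mathlib

open MeasureTheory Metric


private lemma min_le_rpow_mul' {x e σ : ℝ} (hx : 0 < x) (he : 0 < e) (h0 : 0 ≤ σ) (h1 : σ ≤ 1) :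
    min x e ≤ x ^ σ * e ^ (1 - σ) := by
  rcases le_total x e with h | h
  · calc min x e ≤ x := min_le_left _ _
    _ = x ^ σ * x ^ (1 - σ) := by
        rw [← Real.rpow_add hx, add_sub_cancel, Real.rpow_one]
    _ ≤ x ^ σ * e ^ (1 - σ) := by gcongr <;> first | exact hx.le | linarith
  · calc min x e ≤ e := min_le_right _ _
    _ = e ^ σ * e ^ (1 - σ) := by
        rw [← Real.rpow_add he, add_sub_cancel, Real.rpow_one]
    _ ≤ x ^ σ * e ^ (1 - σ) := by gcongr


lemma claimA (ℓ : ℕ → ℝ) (hpos : ∀ n, 0 < ℓ n) (hsum : Summable ℓ)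
    (c t σ : ℝ) (hc : 0 < c) (ht : 0 ≤ t) (htσ : t < σ)
    (hcount : ∀ ε : ℝ, 0 < ε → ∀ u : Finset ℕ, (∀ n ∈ u, 2 * ε ≤ ℓ n) →
      (u.card : ℝ) * (2 * ε) ≤ c * ε ^ (1 - t)) :
    Summable fun n => ℓ n ^ σ := by
  set M : ℝ := ∑' n, ℓ n with hM
  have hM0 : 0 < M := Summable.tsum_pos hsum (fun n => (hpos n).le) 0 (hpos 0)
  have hle : ∀ n, ℓ n ≤ M := fun n => Summable.le_tsum hsum n (fun j _ => (hpos j).le)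
  set K : ℕ → ℕ := fun n => ⌊Real.logb 2 (M / ℓ n)⌋₊ with hKdef
  have hratio : ∀ n, 1 ≤ M / ℓ n := fun n => (one_le_div (hpos n)).2 (hle n)
  have hlogb : ∀ n, 0 ≤ Real.logb 2 (M / ℓ n) := fun n =>
    Real.logb_nonneg one_lt_two (hratio n)
  have hK1 : ∀ n, ℓ n ≤ M / 2 ^ (K n) := by
    intro n
    rw [le_div_iff₀ (by positivity)]
    have h1 : ((2:ℝ) ^ (K n) : ℝ) ≤ M / ℓ n := by
      have := Real.rpow_le_rpow_of_exponent_le (one_le_two (α := ℝ))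
        (Nat.floor_le (hlogb n))
      rw [Real.rpow_logb two_pos (by norm_num) (div_pos hM0 (hpos n))] at this
      calc ((2:ℝ) ^ (K n) : ℝ) = (2:ℝ) ^ ((K n : ℝ)) := by
            rw [Real.rpow_natCast]
        _ ≤ M / ℓ n := this
    calc ℓ n * 2 ^ (K n) ≤ ℓ n * (M / ℓ n) := by gcongr; exact (hpos n).le
      _ = M := by rw [mul_div_assoc'] ; exact mul_div_cancel_left₀ M (hpos n).ne'
  have hK2 : ∀ n, M / 2 ^ (K n + 1) ≤ ℓ n := by
    intro n
    rw [div_le_iff₀ (by positivity)]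
    have h1 : M / ℓ n ≤ ((2:ℝ) ^ (K n + 1) : ℝ) := by
      have h2 := (Nat.lt_floor_add_one (Real.logb 2 (M / ℓ n))).le
      have := Real.rpow_le_rpow_of_exponent_le (one_le_two (α := ℝ)) h2
      rw [Real.rpow_logb two_pos (by norm_num) (div_pos hM0 (hpos n))] at this
      calc M / ℓ n ≤ (2:ℝ) ^ ((⌊Real.logb 2 (M / ℓ n)⌋₊ : ℝ) + 1) := this
        _ = (2:ℝ) ^ ((K n : ℝ) + 1) := rfl
        _ = ((2:ℝ) ^ (K n + 1) : ℝ) := by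
            rw [← Real.rpow_natCast 2 (K n + 1)]; push_cast; ring_nf
    calc M = ℓ n * (M / ℓ n) := by
          rw [mul_div_assoc']
          exact (mul_div_cancel_left₀ M (hpos n).ne').symm
      _ ≤ ℓ n * 2 ^ (K n + 1) := by gcongr; exact (hpos n).le
  set r : ℝ := (2:ℝ) ^ (t - σ) with hr
  have hr0 : 0 < r := Real.rpow_pos_of_pos two_pos _
  have hr1 : r < 1 := Real.rpow_lt_one_of_one_lt_of_neg one_lt_two (by linarith)
  set C2 : ℝ := (c / 2) * M ^ (-t) * 2 ^ (2 * t) * M ^ σ with hC2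
  have hC20 : 0 < C2 := by
    have := Real.rpow_pos_of_pos hM0 (-t)
    have := Real.rpow_pos_of_pos hM0 σ
    have := Real.rpow_pos_of_pos (two_pos (α := ℝ)) (2*t)
    positivity
  have hfiber : ∀ (k : ℕ) (u : Finset ℕ), (∀ n ∈ u, K n = k) →
      ∑ n ∈ u, ℓ n ^ σ ≤ C2 * r ^ k := by
    intro k u hu
    set ε : ℝ := M / 2 ^ (k + 2) with hε
    have hε0 : 0 < ε := by positivity
    have h2ε : 2 * ε = M / 2 ^ (k + 1) := by
      rw [hε]; field_simp; ring
    have hcard : (u.card : ℝ) * (2 * ε) ≤ c * ε ^ (1 - t) := by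
      apply hcount ε hε0 u
      intro n hn
      rw [h2ε, ← hu n hn]
      exact hK2 n
    have hcard2 : (u.card : ℝ) ≤ c / 2 * ε ^ (-t) := by
      have he : c * ε ^ (1 - t) / (2 * ε) = c / 2 * ε ^ (-t) := by
        rw [show (1:ℝ) - t = -t + 1 by ring, Real.rpow_add hε0, Real.rpow_one]
        field_simp
      rw [← he, le_div_iff₀ (by positivity)]
      exact hcard
    have hterm : ∀ n ∈ u, ℓ n ^ σ ≤ (M / 2 ^ k) ^ σ := by
      intro n hn
      apply Real.rpow_le_rpow (hpos n).le _ (by linarith)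
      rw [← hu n hn]; exact hK1 n
    have key : c / 2 * ε ^ (-t) * (M / 2 ^ k) ^ σ = C2 * r ^ k := by
      rw [hε, hr, hC2]
      rw [show ((2:ℝ) ^ (k+2) : ℝ) = (2:ℝ) ^ (((k:ℝ)) + 2) by
        rw [← Real.rpow_natCast 2 (k+2)]; push_cast; ring_nf]
      rw [show ((2:ℝ) ^ k : ℝ) = (2:ℝ) ^ ((k:ℝ)) from (Real.rpow_natCast 2 k).symm]
      rw [← Real.rpow_natCast ((2:ℝ) ^ (t - σ)) k, ← Real.rpow_mul two_pos.le]
      rw [Real.div_rpow hM0.le (Real.rpow_nonneg two_pos.le _),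
          Real.div_rpow hM0.le (Real.rpow_nonneg two_pos.le _)]
      rw [← Real.rpow_mul two_pos.le, ← Real.rpow_mul two_pos.le]
      have ediv : ∀ (m x : ℝ), m / (2:ℝ) ^ x = m * 2 ^ (-x) := fun m x => by
        rw [Real.rpow_neg two_pos.le, div_eq_mul_inv]
      rw [ediv (M ^ (-t)), ediv (M ^ σ)]
      rw [show -(((k:ℝ) + 2) * -t) = 2 * t + t * (k:ℝ) by ring]
      rw [Real.rpow_add two_pos (2 * t) (t * (k:ℝ))]
      rw [show ((t - σ) * (k:ℝ)) = t * (k:ℝ) + -((k:ℝ) * σ) by ring]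
      rw [Real.rpow_add two_pos]
      ring
    calc ∑ n ∈ u, ℓ n ^ σ ≤ u.card • ((M / 2 ^ k) ^ σ : ℝ) :=
          Finset.sum_le_card_nsmul u _ _ hterm
      _ = (u.card : ℝ) * (M / 2 ^ k) ^ σ := by rw [nsmul_eq_mul]
      _ ≤ (c / 2 * ε ^ (-t)) * (M / 2 ^ k) ^ σ := by
          gcongr
      _ = C2 * r ^ k := key
  -- conclude summability
  have hgeo : Summable (fun k : ℕ => C2 * r ^ k) :=
    (summable_geometric_of_lt_one hr0.le hr1).mul_left C2
  apply summable_of_sum_range_le (c := ∑' k : ℕ, C2 * r ^ k)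
    (fun n => Real.rpow_nonneg (hpos n).le σ)
  intro n
  classical
  rw [← Finset.sum_fiberwise_of_maps_to (g := K) (t := (Finset.range n).image K)
    (fun i hi => Finset.mem_image_of_mem K hi) (fun i => ℓ i ^ σ)]
  calc ∑ k ∈ (Finset.range n).image K, ∑ i ∈ (Finset.range n).filter (fun i => K i = k), ℓ i ^ σ
      ≤ ∑ k ∈ (Finset.range n).image K, C2 * r ^ k := by
        apply Finset.sum_le_sum
        intro k hk
        exact hfiber k _ (fun i hi => (Finset.mem_filter.1 hi).2)
    _ ≤ ∑' k : ℕ, C2 * r ^ k :=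
        Summable.sum_le_tsum _ (fun k _ => by positivity) hgeo


lemma vol_eq (a b : ℕ → ℝ) (hab : ∀ n, a n < b n)
    (hdisj : Pairwise (Function.onFun Disjoint (fun n => Set.Ioo (a n) (b n))))
    (ε : ℝ) (hε : 0 < ε) :
    volume {x ∈ (⋃ n, Set.Ioo (a n) (b n)) |
        infDist x (frontier (⋃ n, Set.Ioo (a n) (b n))) ≤ ε}
      = ∑' n, ENNReal.ofReal (min (b n - a n) (2 * ε)) := by
  set L : Set ℝ := ⋃ n, Set.Ioo (a n) (b n) with hL
  have hopen : IsOpen L := isOpen_iUnion (fun n => isOpen_Ioo)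
  have hfr : frontier L = closure L \ L := hopen.frontier_eq
  have hnotin : ∀ n (p : ℝ), p ∈ closure (Set.Ioo (a n) (b n)) →
      p ∉ Set.Ioo (a n) (b n) → p ∉ L := by
    intro n p hpc hpn hmem
    rw [hL, Set.mem_iUnion] at hmem
    obtain ⟨m, hm⟩ := hmem
    rcases eq_or_ne m n with rfl | hmn
    · exact hpn hm
    · have hne : (Set.Ioo (a m) (b m) ∩ Set.Ioo (a n) (b n)).Nonempty :=
        mem_closure_iff.1 hpc _ isOpen_Ioo hm
      exact hne.ne_empty (Set.disjoint_iff_inter_eq_empty.1 (hdisj hmn))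
  have hfrmem : ∀ n, a n ∈ frontier L ∧ b n ∈ frontier L := by
    intro n
    have hca : a n ∈ closure (Set.Ioo (a n) (b n)) := by
      rw [closure_Ioo (hab n).ne]; exact ⟨le_rfl, (hab n).le⟩
    have hcb : b n ∈ closure (Set.Ioo (a n) (b n)) := by
      rw [closure_Ioo (hab n).ne]; exact ⟨(hab n).le, le_rfl⟩
    rw [hfr]
    exact ⟨⟨closure_mono (Set.subset_iUnion _ n) hca, hnotin n _ hca (by simp)⟩,
           ⟨closure_mono (Set.subset_iUnion _ n) hcb, hnotin n _ hcb (by simp)⟩⟩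
  have hFne : (frontier L).Nonempty := ⟨a 0, (hfrmem 0).1⟩
  -- infDist formula on each interval
  have hinf : ∀ n, ∀ x ∈ Set.Ioo (a n) (b n),
      infDist x (frontier L) = min (x - a n) (b n - x) := by
    intro n x hx
    apply le_antisymm
    · apply le_min
      · calc infDist x (frontier L) ≤ dist x (a n) :=
            infDist_le_dist_of_mem (hfrmem n).1
          _ = x - a n := by rw [Real.dist_eq, abs_of_pos (by linarith [hx.1])]
      · calc infDist x (frontier L) ≤ dist x (b n) :=
            infDist_le_dist_of_mem (hfrmem n).2
          _ = b n - x := by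
            rw [Real.dist_eq, abs_of_neg (by linarith [hx.2])]; ring
    · by_contra hlt
      push_neg at hlt
      obtain ⟨y, hy, hdy⟩ := (infDist_lt_iff hFne).1 hlt
      revert hdy
      rw [imp_false, not_lt]
      have hyL : y ∉ L := by rw [hfr] at hy; exact hy.2
      have hyI : y ∉ Set.Ioo (a n) (b n) := fun h => hyL (Set.mem_iUnion.2 ⟨n, h⟩)
      rw [Set.mem_Ioo, not_and_or, not_lt, not_lt] at hyI
      rw [Real.dist_eq]
      rcases hyI with h | h
      · exact le_trans (min_le_left _ _) (le_abs.2 (Or.inl (by linarith)))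
      · exact le_trans (min_le_right _ _) (le_abs.2 (Or.inr (by linarith)))
  -- the set identity
  have hset : {x ∈ L | infDist x (frontier L) ≤ ε}
      = ⋃ n, (Set.Ioo (a n) (b n) \ Set.Ioo (a n + ε) (b n - ε)) := by
    ext x
    constructor
    · rintro ⟨hxL, hd⟩
      obtain ⟨n, hx⟩ := Set.mem_iUnion.1 hxL
      refine Set.mem_iUnion.2 ⟨n, hx, fun hx2 => ?_⟩
      rw [hinf n x hx] at hd
      have h1 : ε < x - a n := by linarith [hx2.1]
      have h2 : ε < b n - x := by linarith [hx2.2]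
      have := lt_min h1 h2
      linarith
    · intro hx
      obtain ⟨n, hx1, hx2⟩ := Set.mem_iUnion.1 hx
      refine ⟨Set.mem_iUnion.2 ⟨n, hx1⟩, ?_⟩
      rw [hinf n x hx1]
      rw [Set.mem_Ioo, not_and_or, not_lt, not_lt] at hx2
      rcases hx2 with h | h
      · exact le_trans (min_le_left _ _) (by linarith)
      · exact le_trans (min_le_right _ _) (by linarith)
  rw [hset, measure_iUnion]
  · congr 1
    ext n
    rcases le_or_gt (b n - a n) (2 * ε) with h | h
    · have : Set.Ioo (a n + ε) (b n - ε) = ∅ := Set.Ioo_eq_empty (by linarith)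
      rw [this, Set.diff_empty, Real.volume_Ioo, min_eq_left h]
    · have hsub : Set.Ioo (a n + ε) (b n - ε) ⊆ Set.Ioo (a n) (b n) :=
        Set.Ioo_subset_Ioo (by linarith) (by linarith)
      rw [measure_diff hsub measurableSet_Ioo.nullMeasurableSet
        (by rw [Real.volume_Ioo]; exact ENNReal.ofReal_ne_top)]
      rw [Real.volume_Ioo, Real.volume_Ioo, min_eq_right h.le,
        ← ENNReal.ofReal_sub _ (by linarith)]
      congr 1
      ring
  · intro i j hij
    exact ((hdisj hij).mono Set.diff_subset Set.diff_subset)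
  · exact fun n => (measurableSet_Ioo.diff measurableSet_Ioo)

/-- Let `L ⊆ ℝ` be a nonempty bounded open set, the disjoint union
of countably many open intervals of lengths `ℓ_n`, and let
`D = inf{ t ≥ 0 : ∃ C > 0, V_L(ε) ≤ C ε^{1−t} for all ε ∈ (0,1] }` be the Minkowski
dimension of `∂L`.  Then `inf{σ > 0 : ∑_n ℓ_n^σ < ∞} = D`; equivalently, for `σ > 0`
the series `∑_n ℓ_n^s` converges absolutely on the half-plane `{Re s > σ}` if and
only if `σ ≥ D`. -/
theorem stmt_6 (a b : ℕ → ℝ) (hab : ∀ n, a n < b n)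
    (L : Set ℝ) (hL : L = ⋃ n, Set.Ioo (a n) (b n))
    (hbdd : Bornology.IsBounded L)
    (hdisj : Pairwise (Function.onFun Disjoint (fun n => Set.Ioo (a n) (b n))))
    (ℓ : ℕ → ℝ) (hℓ : ∀ n, ℓ n = b n - a n)
    (D : ℝ)
    (hD : D = sInf {t : ℝ | 0 ≤ t ∧ ∃ c : ℝ, 0 < c ∧
      ∀ ε ∈ Set.Ioc (0 : ℝ) 1,
        (volume {x ∈ L | infDist x (frontier L) ≤ ε}).toReal ≤ c * ε ^ (1 - t)}) :
    sInf {σ : ℝ | 0 < σ ∧ Summable (fun n => ℓ n ^ σ)} = D ∧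
    ∀ σ : ℝ, 0 < σ →
      ((∀ s : ℂ, σ < s.re → Summable (fun n => ‖(ℓ n : ℂ) ^ s‖)) ↔ D ≤ σ) := by
  subst hL
  set L : Set ℝ := ⋃ n, Set.Ioo (a n) (b n) with hL
  have hpos : ∀ n, 0 < ℓ n := fun n => by rw [hℓ]; linarith [hab n]
  -- total length
  have hvolL : volume L = ∑' n, ENNReal.ofReal (ℓ n) := by
    rw [hL, measure_iUnion hdisj (fun n => measurableSet_Ioo)]
    congr 1; funext n; rw [Real.volume_Ioo, hℓ]
  have hfin : (∑' n, ENNReal.ofReal (ℓ n)) ≠ ⊤ := by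
    rw [← hvolL]; exact hbdd.measure_lt_top.ne
  have hsum : Summable ℓ := by
    exact (ENNReal.summable_toReal hfin).congr
      (fun n => ENNReal.toReal_ofReal (hpos n).le)
  set M : ℝ := ∑' n, ℓ n with hM
  have hM0 : 0 < M := Summable.tsum_pos hsum (fun n => (hpos n).le) 0 (hpos 0)
  -- min summability and tube formula
  have hsummin : ∀ ε : ℝ, 0 < ε → Summable (fun n => min (ℓ n) (2 * ε)) := fun ε hε =>
    Summable.of_nonneg_of_le (fun n => le_min (hpos n).le (by positivity))
      (fun n => min_le_left _ _) hsum
  have hWM : ∀ ε : ℝ, 0 < ε → (∑' n, min (ℓ n) (2 * ε)) ≤ M := fun ε hε =>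
    Summable.tsum_le_tsum (fun n => min_le_left _ _) (hsummin ε hε) hsum
  have hVW : ∀ ε : ℝ, 0 < ε →
      (volume {x ∈ L | infDist x (frontier L) ≤ ε}).toReal
        = ∑' n, min (ℓ n) (2 * ε) := by
    intro ε hε
    rw [hL, vol_eq a b hab hdisj ε hε]
    rw [ENNReal.tsum_toReal_eq (fun n => ENNReal.ofReal_ne_top)]
    congr 1; funext n
    rw [ENNReal.toReal_ofReal (le_min (by linarith [hab n]) (by positivity)), hℓ]
  set S : Set ℝ := {σ : ℝ | 0 < σ ∧ Summable (fun n => ℓ n ^ σ)} with hS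
  set T : Set ℝ := {t : ℝ | 0 ≤ t ∧ ∃ c : ℝ, 0 < c ∧
      ∀ ε ∈ Set.Ioc (0 : ℝ) 1,
        (volume {x ∈ L | infDist x (frontier L) ≤ ε}).toReal ≤ c * ε ^ (1 - t)} with hT
  have h1S : (1:ℝ) ∈ S := ⟨one_pos, by
    apply hsum.congr; intro n; rw [Real.rpow_one]⟩
  have h1T : (1:ℝ) ∈ T := by
    refine ⟨zero_le_one, M + 1, by linarith, fun ε hε => ?_⟩
    rw [hVW ε hε.1, sub_self, Real.rpow_zero, mul_one]
    linarith [hWM ε hε.1]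
  have SbddBelow : BddBelow S := ⟨0, fun σ hσ => hσ.1.le⟩
  have TbddBelow : BddBelow T := ⟨0, fun t ht => ht.1⟩
  have Sne : S.Nonempty := ⟨1, h1S⟩
  have Tne : T.Nonempty := ⟨1, h1T⟩
  -- Claim B : summable with small exponent gives tube bound
  have claimB : ∀ σ ∈ S, σ ≤ 1 → σ ∈ T := by
    intro σ hσS hσ1
    have hSig0 : 0 ≤ ∑' n, ℓ n ^ σ :=
      tsum_nonneg (fun n => Real.rpow_nonneg (hpos n).le σ)
    refine ⟨hσS.1.le, 2 * (∑' n, ℓ n ^ σ) + 1, by linarith, fun ε hε => ?_⟩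
    rw [hVW ε hε.1]
    have hεp : (0:ℝ) < ε := hε.1
    calc (∑' n, min (ℓ n) (2 * ε))
        ≤ ∑' n, ℓ n ^ σ * (2 * ε) ^ (1 - σ) := by
          refine Summable.tsum_le_tsum (fun n => ?_) (hsummin ε hεp) ((hσS.2).mul_right _)
          exact min_le_rpow_mul' (hpos n) (by positivity) hσS.1.le hσ1
      _ = (∑' n, ℓ n ^ σ) * (2 * ε) ^ (1 - σ) := tsum_mul_right
      _ = (∑' n, ℓ n ^ σ) * (2 ^ (1 - σ) * ε ^ (1 - σ)) := by
          rw [Real.mul_rpow two_pos.le hεp.le]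
      _ ≤ (∑' n, ℓ n ^ σ) * (2 * ε ^ (1 - σ)) := by
          gcongr
          calc (2:ℝ) ^ (1 - σ) ≤ (2:ℝ) ^ (1:ℝ) :=
                Real.rpow_le_rpow_of_exponent_le one_le_two (by linarith [hσS.1])
            _ = 2 := Real.rpow_one 2
      _ = 2 * (∑' n, ℓ n ^ σ) * ε ^ (1 - σ) := by ring
      _ ≤ (2 * (∑' n, ℓ n ^ σ) + 1) * ε ^ (1 - σ) := by
          have hεσ : 0 ≤ ε ^ (1 - σ) := Real.rpow_nonneg hεp.le _
          nlinarith [hSig0, hεσ]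
  -- Claim A consequence : t ∈ T with t < 1 forces σ ∈ S for σ ∈ (t,1)
  have claimA' : ∀ t ∈ T, t < 1 → ∀ σ, t < σ → 0 < σ → σ ∈ S := by
    intro t htT ht1 σ htσ hσ0
    obtain ⟨ht0, c, hc, hVb⟩ := htT
    refine ⟨hσ0, ?_⟩
    apply claimA ℓ hpos hsum (max c M) t σ (lt_max_of_lt_left hc) ht0 htσ
    intro ε hε u hu
    have hsumu : (u.card : ℝ) * (2 * ε) = ∑ n ∈ u, min (ℓ n) (2 * ε) := by
      rw [Finset.sum_congr rfl (fun n hn => min_eq_right (hu n hn)),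
        Finset.sum_const, nsmul_eq_mul]
    have hstep : (u.card : ℝ) * (2 * ε) ≤ ∑' n, min (ℓ n) (2 * ε) := by
      rw [hsumu]
      exact Summable.sum_le_tsum u (fun n _ => le_min (hpos n).le (by positivity)) (hsummin ε hε)
    rcases le_or_gt ε 1 with hε1 | hε1
    · calc (u.card : ℝ) * (2 * ε) ≤ _ := hstep
        _ = (volume {x ∈ L | infDist x (frontier L) ≤ ε}).toReal := (hVW ε hε).symm
        _ ≤ c * ε ^ (1 - t) := hVb ε ⟨hε, hε1⟩
        _ ≤ max c M * ε ^ (1 - t) := by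
            gcongr
            exact le_max_left _ _
    · have h1ε : (1:ℝ) ≤ ε ^ (1 - t) := by
        calc (1:ℝ) = ε ^ (0:ℝ) := (Real.rpow_zero ε).symm
          _ ≤ ε ^ (1 - t) := Real.rpow_le_rpow_of_exponent_le hε1.le (by linarith)
      calc (u.card : ℝ) * (2 * ε) ≤ M := le_trans hstep (hWM ε hε)
        _ = M * 1 := (mul_one M).symm
        _ ≤ max c M * ε ^ (1 - t) :=
            mul_le_mul (le_max_right _ _) h1ε zero_le_one
              (le_trans hc.le (le_max_left _ _))
  -- main equality
  have hmain : sInf S = D := by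
    rw [hD]
    apply le_antisymm
    · apply le_csInf Tne
      intro t htT
      rcases lt_or_ge t 1 with ht1 | ht1
      · by_contra hlt
        push_neg at hlt
        set σ : ℝ := min ((t + sInf S)/2) ((t+1)/2) with hσdef
        have ht0 : 0 ≤ t := htT.1
        have hσt : t < σ := lt_min (by linarith) (by linarith)
        have hσ1 : σ < 1 := lt_of_le_of_lt (min_le_right _ _) (by linarith)
        have hσS : σ ∈ S := claimA' t htT ht1 σ hσt (by linarith)
        have h1 : sInf S ≤ σ := csInf_le SbddBelow hσS
        have h2 : σ < sInf S := lt_of_le_of_lt (min_le_left _ _) (by linarith)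
        linarith
      · exact le_trans (csInf_le SbddBelow h1S) ht1
    · apply le_csInf Sne
      intro σ hσS
      rcases le_or_gt σ 1 with hσ1 | hσ1
      · exact csInf_le TbddBelow (claimB σ hσS hσ1)
      · exact le_trans (csInf_le TbddBelow h1T) hσ1.le
  refine ⟨hmain, ?_⟩
  intro σ0 hσ0
  have habs : ∀ (s : ℂ) (n : ℕ), ‖(ℓ n : ℂ) ^ s‖ = ℓ n ^ s.re :=
    fun s n => Complex.norm_cpow_eq_rpow_re_of_pos (hpos n) s
  constructor
  · intro h
    rw [← hmain]
    by_contra hlt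
    push_neg at hlt
    set τ : ℝ := (σ0 + sInf S)/2 with hτ
    have hτS : τ ∈ S := by
      refine ⟨by linarith, ?_⟩
      have := h (τ : ℂ) (by simpa using by linarith : σ0 < (τ:ℂ).re)
      apply this.congr
      intro n
      rw [habs (τ:ℂ) n, Complex.ofReal_re]
    have := csInf_le SbddBelow hτS
    have : sInf S ≤ τ := this
    rw [hτ] at this
    linarith
  · intro hDσ s hs
    have hlt : sInf S < s.re := by rw [hmain]; linarith
    obtain ⟨τ, hτS, hτlt⟩ := exists_lt_of_csInf_lt Sne hlt
    have hev : ∀ᶠ n in Filter.cofinite, ‖ℓ n ^ s.re‖ ≤ ℓ n ^ τ := by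
      rw [Nat.cofinite_eq_atTop]
      filter_upwards [hsum.tendsto_atTop_zero.eventually (gt_mem_nhds one_pos)] with n hn
      rw [Real.norm_eq_abs, abs_of_nonneg (Real.rpow_nonneg (hpos n).le _)]
      exact Real.rpow_le_rpow_of_exponent_ge (hpos n) hn.le hτlt.le
    have hsre : Summable (fun n => ℓ n ^ s.re) :=
      Summable.of_norm_bounded_eventually hτS.2 hev
    apply hsre.congr
    intro n
    rw [habs s n]
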